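/- If S is a propositional action emulation witnessing A ⇄_P B, then defining η(x,y) := ⊤ if S(x,y) and η(x,y) := ⊥ otherwise yields a generalized action emulation witnessing A ⇄_G B. Conversely, if some η with values in {⊥,⊤} is a generalized action emulation witnessing A ⇄_G B, then S := {(x,y) : η(x,y) = ⊤ and Pre^A(x) ∧ Pre^B(y) satisfiable} is a propositional action emulation witnessing A ⇄_P B. -/
import Mathlib


/-- Modal formulas over label set `A` and proposition set `P`. -/
inductive Form (A P : Type) : Type
  | top : Form A P
  | atom : P → Form A P
  | neg : Form A P → Form A P
  | or : Form A P → Form A P → Form A P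
  | dia : A → Form A P → Form A P

namespace Form
variable {A P : Type}
def and (φ ψ : Form A P) : Form A P := Form.neg ((Form.neg φ).or (Form.neg ψ))
def box (a : A) (φ : Form A P) : Form A P := Form.neg (Form.dia a (Form.neg φ))
def bot : Form A P := Form.neg Form.top
def imp (φ ψ : Form A P) : Form A P := (Form.neg φ).or ψ
end Form

/-- Kripke models. -/
structure Kripke (A P : Type) : Type 1 where
  W : Type
  val : W → P → Prop
  rel : A → W → W → Prop
  actual : Set W

variable {A P : Type}

/-- Satisfaction of a modal formula at a world. -/
def sat (M : Kripke A P) : M.W → Form A P → Prop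
  | _, .top => True
  | w, .atom p => M.val w p
  | w, .neg φ => ¬ sat M w φ
  | w, .or φ ψ => sat M w φ ∨ sat M w ψ
  | w, .dia a φ => ∃ v, M.rel a w v ∧ sat M v φ

/-- Semantic entailment over all Kripke models. -/
def entails (φ ψ : Form A P) : Prop := ∀ (M : Kripke A P) (w : M.W), sat M w φ → sat M w ψ

/-- Semantic equivalence. -/
def equivF (φ ψ : Form A P) : Prop := entails φ ψ ∧ entails ψ φ

def satisfiable (φ : Form A P) : Prop := ∃ (M : Kripke A P) (w : M.W), sat M w φ

def valid (φ : Form A P) : Prop := ∀ (M : Kripke A P) (w : M.W), sat M w φ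

/-- Finite disjunction (empty disjunction is `⊥`). -/
def bigOr : List (Form A P) → Form A P
  | [] => Form.bot
  | φ :: l => φ.or (bigOr l)

/-- Finite conjunction (empty conjunction is `⊤`). -/
def bigAnd : List (Form A P) → Form A P
  | [] => Form.top
  | φ :: l => φ.and (bigAnd l)

/-- `⋀_{a ∈ A} □_a (ξ a)` for a finite label set `A`. -/
noncomputable def boxConj [Fintype A] (ξ : A → Form A P) : Form A P :=
  bigAnd ((Finset.univ : Finset A).toList.map fun a => Form.box a (ξ a))

/-- `R` is a bisimulation between Kripke models `M` and `N`. -/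
def IsBisim (M N : Kripke A P) (R : M.W → N.W → Prop) : Prop :=
  ∀ w v, R w v →
    ((∀ p, M.val w p ↔ N.val v p) ∧
     (∀ a w', M.rel a w w' → ∃ v', N.rel a v v' ∧ R w' v') ∧
     (∀ a v', N.rel a v v' → ∃ w', M.rel a w w' ∧ R w' v'))

/-- Pointed bisimilarity of Kripke models (Zig0/Zag0 on actual worlds). -/
def Bisimilar (M N : Kripke A P) : Prop :=
  ∃ R, IsBisim M N R ∧ (∀ w ∈ M.actual, ∃ v ∈ N.actual, R w v) ∧
       (∀ v ∈ N.actual, ∃ w ∈ M.actual, R w v)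

/-- Action models. -/
structure ActionModel (A P : Type) : Type 1 where
  E : Type
  pre : E → Form A P
  rel : A → E → E → Prop
  actual : Set E

/-- The update product `M ⊗ 𝔄`. -/
def update (M : Kripke A P) (𝔄 : ActionModel A P) : Kripke A P where
  W := {p : M.W × 𝔄.E // sat M p.1 (𝔄.pre p.2)}
  val w p := M.val w.1.1 p
  rel a w v := M.rel a w.1.1 v.1.1 ∧ 𝔄.rel a w.1.2 v.1.2
  actual := {w | w.1.1 ∈ M.actual ∧ w.1.2 ∈ 𝔄.actual}

/-- Action model equivalence: same updating effect (up to bisimilarity) on every Kripke model. -/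
def AMEquiv (𝔄 𝔅 : ActionModel A P) : Prop :=
  ∀ M : Kripke A P, Bisimilar (update M 𝔄) (update M 𝔅)

/-- `S` is an action bisimulation between action models `𝔄` and `𝔅`. -/
def IsActBisim (𝔄 𝔅 : ActionModel A P) (S : 𝔄.E → 𝔅.E → Prop) : Prop :=
  ∀ x y, S x y →
    (equivF (𝔄.pre x) (𝔅.pre y) ∧
     (∀ a x', 𝔄.rel a x x' → satisfiable ((𝔄.pre x).and (Form.dia a (𝔄.pre x'))) →
        ∃ y', 𝔅.rel a y y' ∧ S x' y') ∧
     (∀ a y', 𝔅.rel a y y' → satisfiable ((𝔅.pre y).and (Form.dia a (𝔅.pre y'))) →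
        ∃ x', 𝔄.rel a x x' ∧ S x' y'))

/-- Action bisimilarity of action models (with Zig0/Zag0 on actual events). -/
def ActBisimilar (𝔄 𝔅 : ActionModel A P) : Prop :=
  ∃ S, IsActBisim 𝔄 𝔅 S ∧ (∀ x ∈ 𝔄.actual, ∃ y ∈ 𝔅.actual, S x y) ∧
       (∀ y ∈ 𝔅.actual, ∃ x ∈ 𝔄.actual, S x y)

/-- Zig of the generalized action emulation:
`η(x,y) ⊨ □_a (Pre^𝔄(x') → ⋁_{y →_a y'} (Pre^𝔅(y') ∧ η(x',y')))`, rendered semantically. -/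
def GAEZig (𝔄 𝔅 : ActionModel A P) (η : 𝔄.E → 𝔅.E → Form A P) : Prop :=
  ∀ (a : A) (x : 𝔄.E) (y : 𝔅.E) (x' : 𝔄.E), 𝔄.rel a x x' →
    ∀ (M : Kripke A P) (w v : M.W), sat M w (η x y) → M.rel a w v → sat M v (𝔄.pre x') →
      ∃ y', 𝔅.rel a y y' ∧ sat M v (𝔅.pre y') ∧ sat M v (η x' y')

/-- Zag of the generalized action emulation. -/
def GAEZag (𝔄 𝔅 : ActionModel A P) (η : 𝔄.E → 𝔅.E → Form A P) : Prop :=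
  ∀ (a : A) (x : 𝔄.E) (y : 𝔅.E) (y' : 𝔅.E), 𝔅.rel a y y' →
    ∀ (M : Kripke A P) (w v : M.W), sat M w (η x y) → M.rel a w v → sat M v (𝔅.pre y') →
      ∃ x', 𝔄.rel a x x' ∧ sat M v (𝔄.pre x') ∧ sat M v (η x' y')

/-- Zig0 of the generalized action emulation:
`Pre^𝔄(x) ⊨ ⋁_{y ∈ E₀^𝔅} (Pre^𝔅(y) ∧ η(x,y))` for actual `x`. -/
def GAEZig0 (𝔄 𝔅 : ActionModel A P) (η : 𝔄.E → 𝔅.E → Form A P) : Prop :=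
  ∀ x ∈ 𝔄.actual, ∀ (M : Kripke A P) (w : M.W), sat M w (𝔄.pre x) →
    ∃ y ∈ 𝔅.actual, sat M w (𝔅.pre y) ∧ sat M w (η x y)

/-- Zag0 of the generalized action emulation. -/
def GAEZag0 (𝔄 𝔅 : ActionModel A P) (η : 𝔄.E → 𝔅.E → Form A P) : Prop :=
  ∀ y ∈ 𝔅.actual, ∀ (M : Kripke A P) (w : M.W), sat M w (𝔅.pre y) →
    ∃ x ∈ 𝔄.actual, sat M w (𝔄.pre x) ∧ sat M w (η x y)

/-- `η` is a generalized action emulation witnessing `𝔄 ⇄_G 𝔅`. -/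
def IsGAE (𝔄 𝔅 : ActionModel A P) (η : 𝔄.E → 𝔅.E → Form A P) : Prop :=
  GAEZig 𝔄 𝔅 η ∧ GAEZag 𝔄 𝔅 η ∧ GAEZig0 𝔄 𝔅 η ∧ GAEZag0 𝔄 𝔅 η

/-- `S` is a propositional action emulation witnessing `𝔄 ⇄_P 𝔅`
(Consistency, Zig, Zag, Zig0, Zag0; disjunctions rendered semantically). -/
def IsPAEW (𝔄 𝔅 : ActionModel A P) (S : 𝔄.E → 𝔅.E → Prop) : Prop :=
  (∀ x y, S x y → satisfiable ((𝔄.pre x).and (𝔅.pre y))) ∧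
  (∀ (a : A) x y x', S x y → 𝔄.rel a x x' →
     ∀ (M : Kripke A P) (w : M.W), sat M w (𝔄.pre x') →
       ∃ y', 𝔅.rel a y y' ∧ S x' y' ∧ sat M w (𝔅.pre y')) ∧
  (∀ (a : A) x y y', S x y → 𝔅.rel a y y' →
     ∀ (M : Kripke A P) (w : M.W), sat M w (𝔅.pre y') →
       ∃ x', 𝔄.rel a x x' ∧ S x' y' ∧ sat M w (𝔄.pre x')) ∧
  (∀ x ∈ 𝔄.actual, ∀ (M : Kripke A P) (w : M.W), sat M w (𝔄.pre x) →
     ∃ y ∈ 𝔅.actual, S x y ∧ sat M w (𝔅.pre y)) ∧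
  (∀ y ∈ 𝔅.actual, ∀ (M : Kripke A P) (w : M.W), sat M w (𝔅.pre y) →
     ∃ x ∈ 𝔄.actual, S x y ∧ sat M w (𝔄.pre x))

/-- `S` is an action emulation witnessing `𝔄 ⇄ 𝔅`
(Consistency, Zig, Zag, Zig0, Zag0; disjunctions and boxes rendered semantically). -/
def IsAEW (𝔄 𝔅 : ActionModel A P) (S : 𝔄.E → 𝔅.E → Prop) : Prop :=
  (∀ x y, S x y → satisfiable ((𝔄.pre x).and (𝔅.pre y))) ∧
  (∀ (a : A) x y x', S x y → 𝔄.rel a x x' →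
     ∀ (M : Kripke A P) (w v : M.W), sat M w (𝔄.pre x) → sat M w (𝔅.pre y) →
       M.rel a w v → sat M v (𝔄.pre x') →
       ∃ y', 𝔅.rel a y y' ∧ S x' y' ∧ sat M v (𝔅.pre y')) ∧
  (∀ (a : A) x y y', S x y → 𝔅.rel a y y' →
     ∀ (M : Kripke A P) (w v : M.W), sat M w (𝔄.pre x) → sat M w (𝔅.pre y) →
       M.rel a w v → sat M v (𝔅.pre y') →
       ∃ x', 𝔄.rel a x x' ∧ S x' y' ∧ sat M v (𝔄.pre x')) ∧
  (∀ x ∈ 𝔄.actual, ∀ (M : Kripke A P) (w : M.W), sat M w (𝔄.pre x) →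
     ∃ y ∈ 𝔅.actual, S x y ∧ sat M w (𝔅.pre y)) ∧
  (∀ y ∈ 𝔅.actual, ∀ (M : Kripke A P) (w : M.W), sat M w (𝔅.pre y) →
     ∃ x ∈ 𝔄.actual, S x y ∧ sat M w (𝔄.pre x))

/-- `L₀`: formulas `α` such that if `α` is satisfiable and `α ⊨ □_a φ` then `φ` is valid. -/
def L0 : Set (Form A P) :=
  {α | satisfiable α → ∀ (a : A) (φ : Form A P), entails α (Form.box a φ) → valid φ}

/-- `Φ` is `Ψ`-regular. -/
def Regular (Φ Ψ : Set (Form A P)) : Prop :=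
  ∀ φ ∈ Φ, ∀ ψ ∈ Ψ, entails ψ φ ∨ entails ψ φ.neg

/-- `Φ` is `Ψ`-basis: every `φ ∈ Φ` is equivalent to a disjunction of a subset of `Ψ`
(disjunction rendered semantically). -/
def IsBasisFor (Φ Ψ : Set (Form A P)) : Prop :=
  ∀ φ ∈ Φ, ∃ Ψ' ⊆ Ψ, ∀ (M : Kripke A P) (w : M.W), sat M w φ ↔ ∃ ψ ∈ Ψ', sat M w ψ

/-- `Φ` is `Ψ`-discrete: if `φ ∈ Φ` entails a finite disjunction `⋁_l ⋀_a □_a ξ_l^a`, then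
`φ ⊨ ⋁_l ⋁ G(⋀_a □_a ξ_l^a, Ψ)` (outer disjunctions rendered semantically). -/
def Discrete [Fintype A] (Φ Ψ : Set (Form A P)) : Prop :=
  ∀ φ ∈ Φ, ∀ (L : ℕ) (ξ : Fin L → A → Form A P),
    entails φ (bigOr ((List.finRange L).map fun l => boxConj (ξ l))) →
    ∀ (M : Kripke A P) (w : M.W), sat M w φ →
      ∃ (l : Fin L), ∃ ψ ∈ Ψ, entails ψ (boxConj (ξ l)) ∧ sat M w ψ

/-- `Φ` is `Ψ`-known: if `φ ∈ Φ` and `φ ⊨ □_a ξ`, then `φ ⊨ □_a ⋁ G(ξ, Ψ)`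
(inner disjunction rendered semantically). -/
def Known (Φ Ψ : Set (Form A P)) : Prop :=
  ∀ φ ∈ Φ, ∀ (a : A) (χ : Form A P), entails φ (Form.box a χ) →
    ∀ (M : Kripke A P) (w v : M.W), sat M w φ → M.rel a w v →
      ∃ ψ ∈ Ψ, entails ψ χ ∧ sat M v ψ

/-- `R_a^𝔄(x)`. -/
def Rset (𝔄 : ActionModel A P) (a : A) (x : 𝔄.E) : Set 𝔄.E :=
  {y | satisfiable ((𝔄.pre x).and (Form.dia a (𝔄.pre y)))}

/-- `Q_a^𝔄(x)`. -/
def Qset (𝔄 : ActionModel A P) (a : A) (x : 𝔄.E) : Set 𝔄.E :=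
  {y | 𝔄.rel a x y ∧ satisfiable ((𝔄.pre x).and (Form.dia a (𝔄.pre y)))}

/-- Modal depth. -/
def depth : Form A P → ℕ
  | .top => 0
  | .atom _ => 0
  | .neg φ => depth φ
  | .or φ ψ => max (depth φ) (depth ψ)
  | .dia _ φ => depth φ + 1

/-- Subformulas. -/
def Subf : Form A P → List (Form A P)
  | .top => [.top]
  | .atom p => [.atom p]
  | .neg φ => .neg φ :: Subf φ
  | .or φ ψ => .or φ ψ :: (Subf φ ++ Subf ψ)
  | .dia a φ => .dia a φ :: Subf φ

/-- Single negation. -/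
def singleNeg : Form A P → Form A P
  | .neg φ => φ
  | φ => .neg φ

/-- Closure under subformulas and single negations. -/
def closureF (φ : Form A P) : Set (Form A P) :=
  {χ | χ ∈ Subf φ ∨ ∃ ψ ∈ Subf φ, χ = singleNeg ψ}

open Classical

/-- Extend a Kripke model with one fresh world, `a0`-related to `w0`. -/
def extM (M : Kripke A P) (a0 : A) (w0 : M.W) : Kripke A P where
  W := Option M.W
  val o p := match o with | some u => M.val u p | none => False
  rel b o1 o2 := match o1, o2 with
    | some u, some v => M.rel b u v
    | none, some v => b = a0 ∧ v = w0
    | _, none => False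
  actual := ∅

lemma sat_extM (M : Kripke A P) (a0 : A) (w0 : M.W) (φ : Form A P) :
    ∀ u : M.W, sat (extM M a0 w0) (some u) φ ↔ sat M u φ := by
  induction φ with
  | top => intro u; simp [sat]
  | atom p => intro u; simp [sat, extM]
  | neg φ ih => intro u; simp [sat, ih u]
  | or φ ψ ih1 ih2 => intro u; simp [sat, ih1 u, ih2 u]
  | dia a φ ih =>
    intro u
    constructor
    · rintro ⟨v, hr, hs⟩
      match v with
      | some v => exact ⟨v, hr, (ih v).1 hs⟩
      | none => exact absurd hr (by simp [extM])
    · rintro ⟨v, hr, hs⟩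
      exact ⟨some v, hr, (ih v).2 hs⟩

lemma sat_and (M : Kripke A P) (w : M.W) (φ ψ : Form A P) :
    sat M w (φ.and ψ) ↔ sat M w φ ∧ sat M w ψ := by
  simp [Form.and, sat]

lemma not_sat_bot (M : Kripke A P) (w : M.W) : ¬ sat M w (Form.bot : Form A P) := by
  simp [Form.bot, sat]

/-- propositional action emulation corresponds exactly to generalized action
emulations taking values in `{⊥, ⊤}`. -/
theorem pae_iff_gae_top_bot (𝔄 𝔅 : ActionModel A P) :
    (∀ S : 𝔄.E → 𝔅.E → Prop, IsPAEW 𝔄 𝔅 S →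
       IsGAE 𝔄 𝔅 (fun x y => if S x y then Form.top else Form.bot)) ∧
    (∀ η : 𝔄.E → 𝔅.E → Form A P,
       (∀ x y, η x y = Form.top ∨ η x y = Form.bot) → IsGAE 𝔄 𝔅 η →
       IsPAEW 𝔄 𝔅 (fun x y => η x y = Form.top ∧ satisfiable ((𝔄.pre x).and (𝔅.pre y)))) := by
  constructor
  · rintro S ⟨hcons, hzig, hzag, hzig0, hzag0⟩
    have hS : ∀ (x : 𝔄.E) (y : 𝔅.E) (M : Kripke A P) (w : M.W),
        sat M w (if S x y then Form.top else Form.bot) → S x y := by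
      intro x y M w h
      by_contra hne
      rw [if_neg hne] at h
      exact not_sat_bot M w h
    refine ⟨?_, ?_, ?_, ?_⟩
    · intro a x y x' hrel M w v hη hwv hx'
      obtain ⟨y', h1, h2, h3⟩ := hzig a x y x' (hS x y M w hη) hrel M v hx'
      exact ⟨y', h1, h3, by simp [if_pos h2, sat]⟩
    · intro a x y y' hrel M w v hη hwv hy'
      obtain ⟨x', h1, h2, h3⟩ := hzag a x y y' (hS x y M w hη) hrel M v hy'
      exact ⟨x', h1, h3, by simp [if_pos h2, sat]⟩
    · intro x hx M w hw
      obtain ⟨y, hy, hSxy, hsat⟩ := hzig0 x hx M w hw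
      exact ⟨y, hy, hsat, by simp [if_pos hSxy, sat]⟩
    · intro y hy M w hw
      obtain ⟨x, hx, hSxy, hsat⟩ := hzag0 y hy M w hw
      exact ⟨x, hx, hsat, by simp [if_pos hSxy, sat]⟩
  · rintro η htb ⟨hzig, hzag, hzig0, hzag0⟩
    have hηsat : ∀ (x : 𝔄.E) (y : 𝔅.E) (M : Kripke A P) (w : M.W),
        sat M w (η x y) → η x y = Form.top := by
      intro x y M w h
      rcases htb x y with h' | h'
      · exact h'
      · rw [h'] at h; exact absurd h (not_sat_bot M w)
    have hηtop : ∀ (x : 𝔄.E) (y : 𝔅.E), η x y = Form.top →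
        ∀ (M : Kripke A P) (w : M.W), sat M w (η x y) := by
      intro x y h M w; rw [h]; trivial
    refine ⟨fun x y h => h.2, ?_, ?_, ?_, ?_⟩
    · intro a x y x' hSxy hrel M w hx'
      let M' := extM M a w
      obtain ⟨y', h1, h2, h3⟩ := hzig a x y x' hrel M' none (some w)
        (hηtop x y hSxy.1 M' none) ⟨rfl, rfl⟩ ((sat_extM M a w _ w).2 hx')
      have hy' : sat M w (𝔅.pre y') := (sat_extM M a w _ w).1 h2
      exact ⟨y', h1, ⟨hηsat _ _ M' _ h3, M, w, (sat_and M w _ _).2 ⟨hx', hy'⟩⟩, hy'⟩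
    · intro a x y y' hSxy hrel M w hy'
      let M' := extM M a w
      obtain ⟨x', h1, h2, h3⟩ := hzag a x y y' hrel M' none (some w)
        (hηtop x y hSxy.1 M' none) ⟨rfl, rfl⟩ ((sat_extM M a w _ w).2 hy')
      have hx' : sat M w (𝔄.pre x') := (sat_extM M a w _ w).1 h2
      exact ⟨x', h1, ⟨hηsat _ _ M' _ h3, M, w, (sat_and M w _ _).2 ⟨hx', hy'⟩⟩, hx'⟩
    · intro x hx M w hw
      obtain ⟨y, hy, h1, h2⟩ := hzig0 x hx M w hw
      exact ⟨y, hy, ⟨hηsat _ _ M w h2, M, w, (sat_and M w _ _).2 ⟨hw, h1⟩⟩, h1⟩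
    · intro y hy M w hw
      obtain ⟨x, hx, h1, h2⟩ := hzag0 y hy M w hw
      exact ⟨x, hx, ⟨hηsat _ _ M w h2, M, w, (sat_and M w _ _).2 ⟨h1, hw⟩⟩, h1⟩
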